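/- With A = √2·[[0,a,0],[a†,0,a],[0,a†,0]] where [a,a†]=1 and N = a†a, A satisfies the noncommutative Cayley–Hamilton identity A³ = 2·diag(2N+3, 2N+1, 2N-1)·A, i.e. the first row of A³ - 2(2N+3)A vanishes, the second row of A³ - 2(2N+1)A vanishes, and the third row of A³ - 2(2N-1)A vanishes. -/
import Mathlib


/-- Noncommutative Cayley–Hamilton identity for the oscillator matrix:
with `[a, a†] = 1`, `N = a†a`, `A = √2·[[0,a,0],[a†,0,a],[0,a†,0]]`, one has
`A³ = 2·diag(2N+3, 2N+1, 2N-1)·A`; in particular each row of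
`A³ - 2(2N+2k+1)A` (with the appropriate shift per row) vanishes. -/
theorem oscillator_cayley_hamilton (R : Type*) [Ring R] [Algebra ℝ R] (a ad : R)
    (h : a * ad - ad * a = 1) :
    let N : R := ad * a
    let A : Matrix (Fin 3) (Fin 3) R :=
      (Real.sqrt 2) • !![0, a, 0; ad, 0, a; 0, ad, 0]
    (A ^ 3 = Matrix.diagonal ![2 * (2 * N + 3), 2 * (2 * N + 1), 2 * (2 * N - 1)] * A) ∧
    (∀ j : Fin 3, (A ^ 3) 0 j - 2 * (2 * N + 3) * A 0 j = 0) ∧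
    (∀ j : Fin 3, (A ^ 3) 1 j - 2 * (2 * N + 1) * A 1 j = 0) ∧
    (∀ j : Fin 3, (A ^ 3) 2 j - 2 * (2 * N - 1) * A 2 j = 0) := by
  intro N A
  have hc : a * ad = ad * a + 1 := by rw [← h]; noncomm_ring
  have hc' : ∀ x : R, a * (ad * x) = ad * (a * x) + x := by
    intro x; rw [← mul_assoc, hc]; noncomm_ring
  have h3 : ∀ x : R, (3 : R) * x = x + x + x := by intro x; noncomm_ring
  have key : A ^ 3 =
      Matrix.diagonal ![2 * (2 * N + 3), 2 * (2 * N + 1), 2 * (2 * N - 1)] * A := by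
    ext i j
    fin_cases i <;> fin_cases j <;>
      · simp [A, pow_succ, Matrix.mul_apply, Fin.sum_univ_succ, Matrix.smul_apply, N,
          Matrix.diagonal, mul_add, add_mul, mul_assoc, hc, hc', smul_smul,
          Real.mul_self_sqrt, mul_smul, two_smul, two_mul, h3, smul_add, sub_mul, smul_sub]
        try abel
  refine ⟨key, ?_, ?_, ?_⟩ <;> intro j <;>
    rw [key, Matrix.diagonal_mul] <;> simp
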